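/- Let δ₀ : ℂ → ℝP², δ₀(z) = [e^{√2 Re(z)} : e^{√2 Re(ω²z)} : e^{√2 Re(ωz)}] with ω = e^{2πi/3}, and let v ∈ ℂ with |v| = 1 and v³ ≠ −1. Then for every z ∈ ℂ the limit lim_{t→+∞} δ₀(z + vt) exists and equals [1:0:0] if arg(v) ∈ (−π/3, π/3), equals [0:1:0] if arg(v) ∈ (π/3, π), and equals [0:0:1] if arg(v) ∈ (π, 5π/3). Moreover, for v = e^{πi/3} and any s ∈ ℝ, lim_{t→+∞} δ₀(i s v + vt) = [1 : e^{√6 s} : 0]. -/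

import Mathlib

open Filter Real

/-- `ω = e^{2πi/3}`. -/
noncomputable def omega3 : ℂ := Complex.exp (2 * Real.pi * Complex.I / 3)

/-- The Ţiţeica affine spherical immersion (homogeneous coordinates of `δ₀`):
`ι₀(z) = (e^{√2 Re z}, e^{√2 Re(ω²z)}, e^{√2 Re(ωz)})`. -/
noncomputable def iota0 (z : ℂ) : Fin 3 → ℝ :=
  ![Real.exp (Real.sqrt 2 * z.re),
    Real.exp (Real.sqrt 2 * (omega3 ^ 2 * z).re),
    Real.exp (Real.sqrt 2 * (omega3 * z).re)]

lemma omega3_re : omega3.re = -(1/2) := by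
  have h : (2 * (Real.pi:ℂ) * Complex.I / 3) = ((2 * Real.pi / 3 : ℝ) : ℂ) * Complex.I := by
    push_cast; ring
  rw [omega3, h, Complex.exp_ofReal_mul_I_re]
  have : 2 * Real.pi / 3 = Real.pi - Real.pi / 3 := by ring
  rw [this, Real.cos_pi_sub, Real.cos_pi_div_three]

lemma omega3_im : omega3.im = Real.sqrt 3 / 2 := by
  have h : (2 * (Real.pi:ℂ) * Complex.I / 3) = ((2 * Real.pi / 3 : ℝ) : ℂ) * Complex.I := by
    push_cast; ring
  rw [omega3, h, Complex.exp_ofReal_mul_I_im]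
  have : 2 * Real.pi / 3 = Real.pi - Real.pi / 3 := by ring
  rw [this, Real.sin_pi_sub, Real.sin_pi_div_three]

lemma omega3_sq_re : (omega3 ^ 2).re = -(1/2) := by
  have h3 : Real.sqrt 3 ^ 2 = 3 := Real.sq_sqrt (by norm_num)
  rw [sq, Complex.mul_re, omega3_re, omega3_im]; nlinarith

lemma omega3_sq_im : (omega3 ^ 2).im = -(Real.sqrt 3 / 2) := by
  rw [sq, Complex.mul_im, omega3_re, omega3_im]; ring

lemma expAB (A B : ℝ) (hB : B < 0) :
    Tendsto (fun t : ℝ => Real.exp (A + B * t)) atTop (nhds 0) := by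
  have h1 : Tendsto (fun t : ℝ => B * t) atTop atBot :=
    tendsto_id.const_mul_atTop_of_neg hB
  have h2 : Tendsto (fun t : ℝ => Real.exp (B * t)) atTop (nhds 0) :=
    Real.tendsto_exp_atBot.comp h1
  have := h2.const_mul (Real.exp A)
  simpa [← Real.exp_add] using this

lemma re_shift (w z v : ℂ) (t : ℝ) :
    (w * (z + v * t)).re = (w * z).re + (w * v).re * t := by
  have : w * (z + v * t) = w * z + (w * v) * (t : ℂ) := by ring
  rw [this]
  simp [Complex.add_re, Complex.mul_re, Complex.ofReal_re, Complex.ofReal_im]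

lemma main_ratio (P Q z v : ℂ) (h : (P * v).re < (Q * v).re) :
    Tendsto (fun t : ℝ => Real.exp (Real.sqrt 2 * (P * (z + v * t)).re) /
      Real.exp (Real.sqrt 2 * (Q * (z + v * t)).re)) atTop (nhds 0) := by
  have hs : (0:ℝ) < Real.sqrt 2 := by positivity
  have key : (fun t : ℝ => Real.exp (Real.sqrt 2 * (P * (z + v * t)).re) /
      Real.exp (Real.sqrt 2 * (Q * (z + v * t)).re)) =
      fun t : ℝ => Real.exp (Real.sqrt 2 * ((P * z).re - (Q * z).re) +
        (Real.sqrt 2 * ((P * v).re - (Q * v).re)) * t) := by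
    funext t
    rw [← Real.exp_sub, re_shift, re_shift]
    ring_nf
  rw [key]
  exact expAB _ _ (by nlinarith)

lemma main_ratio_eq (P Q z v : ℂ) (h : (P * v).re = (Q * v).re) :
    (fun t : ℝ => Real.exp (Real.sqrt 2 * (P * (z + v * t)).re) /
      Real.exp (Real.sqrt 2 * (Q * (z + v * t)).re)) =
      fun _ : ℝ => Real.exp (Real.sqrt 2 * ((P * z).re - (Q * z).re)) := by
  funext t
  rw [← Real.exp_sub, re_shift, re_shift, h]
  ring_nf

set_option maxHeartbeats 2000000 in
/-- limits of `δ₀(z + vt)` as `t → +∞` for `|v| = 1`, `v³ ≠ −1`.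
Convergence to a vertex `[1:0:0]`, `[0:1:0]`, `[0:0:1]` of the triangle is
expressed in the corresponding affine chart of `ℝP²` by the vanishing of the
ratios of the other two homogeneous coordinates to the dominant one.  (In
Mathlib `Complex.arg` takes values in `(−π, π]`; the interval `(π, 5π/3)` of
the statement corresponds to `arg v ∈ (−π, −π/3)`.)  Moreover for
`v = e^{πi/3}` and `s ∈ ℝ`, `δ₀(isv + vt) → [1 : e^{√6 s} : 0]`. -/
theorem stmt11 (v : ℂ) (hv : ‖v‖ = 1) (hv3 : v ^ 3 ≠ -1) :
    (∀ z : ℂ, Complex.arg v ∈ Set.Ioo (-(π / 3)) (π / 3) →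
      Tendsto (fun t : ℝ =>
          (iota0 (z + v * t) 1 / iota0 (z + v * t) 0,
           iota0 (z + v * t) 2 / iota0 (z + v * t) 0))
        atTop (nhds (0, 0))) ∧
    (∀ z : ℂ, Complex.arg v ∈ Set.Ioo (π / 3) π →
      Tendsto (fun t : ℝ =>
          (iota0 (z + v * t) 0 / iota0 (z + v * t) 1,
           iota0 (z + v * t) 2 / iota0 (z + v * t) 1))
        atTop (nhds (0, 0))) ∧
    (∀ z : ℂ, Complex.arg v ∈ Set.Ioo (-π) (-(π / 3)) →
      Tendsto (fun t : ℝ =>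
          (iota0 (z + v * t) 0 / iota0 (z + v * t) 2,
           iota0 (z + v * t) 1 / iota0 (z + v * t) 2))
        atTop (nhds (0, 0))) ∧
    (v = Complex.exp (π * Complex.I / 3) → ∀ s : ℝ,
      Tendsto (fun t : ℝ =>
          (iota0 (Complex.I * s * v + v * t) 1 / iota0 (Complex.I * s * v + v * t) 0,
           iota0 (Complex.I * s * v + v * t) 2 / iota0 (Complex.I * s * v + v * t) 0))
        atTop (nhds (Real.exp (Real.sqrt 6 * s), 0))) := by
  have hpi : (0:ℝ) < π := Real.pi_pos
  have h3 : Real.sqrt 3 ^ 2 = 3 := Real.sq_sqrt (by norm_num)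
  have h3p : (0:ℝ) < Real.sqrt 3 := by positivity
  have hvne : v ≠ 0 := by
    intro h; rw [h] at hv; simp at hv
  have ha : v.re = Real.cos (Complex.arg v) := by
    rw [Complex.cos_arg hvne, hv, div_one]
  have hb : v.im = Real.sin (Complex.arg v) := by
    rw [Complex.sin_arg, hv, div_one]
  set θ := Complex.arg v with hθ
  -- rewriting lemmas for iota0 ratios
  have e10 : ∀ w : ℂ, (fun t : ℝ => iota0 (w + v * t) 1 / iota0 (w + v * t) 0) =
      fun t : ℝ => Real.exp (Real.sqrt 2 * (omega3 ^ 2 * (w + v * t)).re) /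
        Real.exp (Real.sqrt 2 * ((1:ℂ) * (w + v * t)).re) := by
    intro w; funext t; simp [iota0]
  have e20 : ∀ w : ℂ, (fun t : ℝ => iota0 (w + v * t) 2 / iota0 (w + v * t) 0) =
      fun t : ℝ => Real.exp (Real.sqrt 2 * (omega3 * (w + v * t)).re) /
        Real.exp (Real.sqrt 2 * ((1:ℂ) * (w + v * t)).re) := by
    intro w; funext t; simp [iota0]
  have e01 : ∀ w : ℂ, (fun t : ℝ => iota0 (w + v * t) 0 / iota0 (w + v * t) 1) =
      fun t : ℝ => Real.exp (Real.sqrt 2 * ((1:ℂ) * (w + v * t)).re) /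
        Real.exp (Real.sqrt 2 * (omega3 ^ 2 * (w + v * t)).re) := by
    intro w; funext t; simp [iota0]
  have e21 : ∀ w : ℂ, (fun t : ℝ => iota0 (w + v * t) 2 / iota0 (w + v * t) 1) =
      fun t : ℝ => Real.exp (Real.sqrt 2 * (omega3 * (w + v * t)).re) /
        Real.exp (Real.sqrt 2 * (omega3 ^ 2 * (w + v * t)).re) := by
    intro w; funext t; simp [iota0]
  have e02 : ∀ w : ℂ, (fun t : ℝ => iota0 (w + v * t) 0 / iota0 (w + v * t) 2) =
      fun t : ℝ => Real.exp (Real.sqrt 2 * ((1:ℂ) * (w + v * t)).re) /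
        Real.exp (Real.sqrt 2 * (omega3 * (w + v * t)).re) := by
    intro w; funext t; simp [iota0]
  have e12 : ∀ w : ℂ, (fun t : ℝ => iota0 (w + v * t) 1 / iota0 (w + v * t) 2) =
      fun t : ℝ => Real.exp (Real.sqrt 2 * (omega3 ^ 2 * (w + v * t)).re) /
        Real.exp (Real.sqrt 2 * (omega3 * (w + v * t)).re) := by
    intro w; funext t; simp [iota0]
  -- real parts
  have r1 : (omega3 ^ 2 * v).re = -(1/2) * v.re + Real.sqrt 3 / 2 * v.im := by
    rw [Complex.mul_re, omega3_sq_re, omega3_sq_im]; ring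
  have r2 : (omega3 * v).re = -(1/2) * v.re - Real.sqrt 3 / 2 * v.im := by
    rw [Complex.mul_re, omega3_re, omega3_im]
  have r0 : ((1:ℂ) * v).re = v.re := by rw [one_mul]
  -- trig expansions
  have hexp1 : Real.sin (θ - π/3) = Real.sin θ * (1/2) - Real.cos θ * (Real.sqrt 3 / 2) := by
    rw [Real.sin_sub, Real.cos_pi_div_three, Real.sin_pi_div_three]
  have hexp2 : Real.sin (θ + π/3) = Real.sin θ * (1/2) + Real.cos θ * (Real.sqrt 3 / 2) := by
    rw [Real.sin_add, Real.cos_pi_div_three, Real.sin_pi_div_three]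
  refine ⟨?_, ?_, ?_, ?_⟩
  · rintro z ⟨h1, h2⟩
    have hs1 : Real.sin (θ - π/3) < 0 :=
      Real.sin_neg_of_neg_of_neg_pi_lt (by linarith) (by linarith)
    have hs2 : 0 < Real.sin (θ + π/3) :=
      Real.sin_pos_of_pos_of_lt_pi (by linarith) (by linarith)
    have iA : (omega3 ^ 2 * v).re < ((1:ℂ) * v).re := by
      rw [r1, r0, ha, hb]
      nlinarith [h3, mul_pos h3p (show (0:ℝ) < Real.sqrt 3 * Real.cos θ - Real.sin θ by linarith)]
    have iB : (omega3 * v).re < ((1:ℂ) * v).re := by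
      rw [r2, r0, ha, hb]
      nlinarith [h3, mul_pos h3p (show (0:ℝ) < Real.sin θ + Real.sqrt 3 * Real.cos θ by linarith)]
    refine Tendsto.prodMk_nhds ?_ ?_
    · rw [e10 z]; exact main_ratio _ _ _ _ iA
    · rw [e20 z]; exact main_ratio _ _ _ _ iB
  · rintro z ⟨h1, h2⟩
    have hs1 : 0 < Real.sin (θ - π/3) :=
      Real.sin_pos_of_pos_of_lt_pi (by linarith) (by linarith)
    have hsθ : 0 < Real.sin θ :=
      Real.sin_pos_of_pos_of_lt_pi (by linarith) h2
    have iA : ((1:ℂ) * v).re < (omega3 ^ 2 * v).re := by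
      rw [r1, r0, ha, hb]
      nlinarith [h3, mul_pos h3p (show (0:ℝ) < Real.sin θ - Real.sqrt 3 * Real.cos θ by linarith)]
    have iB : (omega3 * v).re < (omega3 ^ 2 * v).re := by
      rw [r1, r2, ha, hb]
      nlinarith [mul_pos h3p hsθ]
    refine Tendsto.prodMk_nhds ?_ ?_
    · rw [e01 z]; exact main_ratio _ _ _ _ iA
    · rw [e21 z]; exact main_ratio _ _ _ _ iB
  · rintro z ⟨h1, h2⟩
    have hs2 : Real.sin (θ + π/3) < 0 :=
      Real.sin_neg_of_neg_of_neg_pi_lt (by linarith) (by linarith)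
    have hsθ : Real.sin θ < 0 :=
      Real.sin_neg_of_neg_of_neg_pi_lt (by linarith) h1
    have iA : ((1:ℂ) * v).re < (omega3 * v).re := by
      rw [r2, r0, ha, hb]
      nlinarith [h3, mul_pos h3p (show (0:ℝ) < -(Real.sin θ) - Real.sqrt 3 * Real.cos θ by linarith)]
    have iB : (omega3 ^ 2 * v).re < (omega3 * v).re := by
      rw [r1, r2, ha, hb]
      nlinarith [mul_pos h3p (neg_pos.mpr hsθ)]
    refine Tendsto.prodMk_nhds ?_ ?_
    · rw [e02 z]; exact main_ratio _ _ _ _ iA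
    · rw [e12 z]; exact main_ratio _ _ _ _ iB
  · intro hveq s
    have hre : v.re = 1/2 := by
      have h : ((Real.pi:ℂ) * Complex.I / 3) = ((Real.pi / 3 : ℝ) : ℂ) * Complex.I := by
        push_cast; ring
      rw [hveq, h, Complex.exp_ofReal_mul_I_re, Real.cos_pi_div_three]
    have him : v.im = Real.sqrt 3 / 2 := by
      have h : ((Real.pi:ℂ) * Complex.I / 3) = ((Real.pi / 3 : ℝ) : ℂ) * Complex.I := by
        push_cast; ring
      rw [hveq, h, Complex.exp_ofReal_mul_I_im, Real.sin_pi_div_three]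
    set z : ℂ := Complex.I * s * v with hz
    have hzre : z.re = -(Real.sqrt 3 / 2) * s := by
      rw [hz, Complex.mul_re, Complex.mul_re, Complex.mul_im, Complex.I_re, Complex.I_im,
        Complex.ofReal_re, Complex.ofReal_im, hre, him]; ring
    have hzim : z.im = s / 2 := by
      rw [hz, Complex.mul_im, Complex.mul_re, Complex.mul_im, Complex.I_re, Complex.I_im,
        Complex.ofReal_re, Complex.ofReal_im, hre, him]; ring
    have heq : (omega3 ^ 2 * v).re = ((1:ℂ) * v).re := by
      rw [r1, r0, hre, him]; linear_combination h3 / 4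
    have iB : (omega3 * v).re < ((1:ℂ) * v).re := by
      rw [r2, r0, hre, him]; nlinarith [h3]
    have hval : Real.sqrt 2 * ((omega3 ^ 2 * z).re - ((1:ℂ) * z).re) = Real.sqrt 6 * s := by
      have h6 : Real.sqrt 6 = Real.sqrt 2 * Real.sqrt 3 := by
        rw [← Real.sqrt_mul (by norm_num : (0:ℝ) ≤ 2)]; norm_num
      rw [one_mul, Complex.mul_re, omega3_sq_re, omega3_sq_im, hzre, hzim, h6]; ring
    refine Tendsto.prodMk_nhds ?_ ?_
    · rw [e10 z, main_ratio_eq _ _ _ _ heq]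
      rw [show Real.exp (Real.sqrt 6 * s) =
          Real.exp (Real.sqrt 2 * ((omega3 ^ 2 * z).re - ((1:ℂ) * z).re)) from by rw [hval]]
      exact tendsto_const_nhds
    · rw [e20 z]; exact main_ratio _ _ _ _ iB
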